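/- Let k be a field, R = (k[X,Y]/(X*Y, Y^2)) localized at (X,Y), with x, y the images of X, Y and m = (x, y). Then m^2 = x*m and y ∉ (x), i.e., (x) is a reduction of m with reduction number exactly 1. -/

import Mathlib

open MvPolynomial

set_option synthInstance.maxHeartbeats 1000000
set_option maxHeartbeats 1000000

/-- `A = k[X,Y]/(XY, Y²)`. -/
abbrev Stmt11Base (k : Type*) [Field k] : Type _ :=
  MvPolynomial (Fin 2) k ⧸
    Ideal.span {X 0 * X 1, (X 1 : MvPolynomial (Fin 2) k) ^ 2}

/-- The image of `X` in `A`. -/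
noncomputable abbrev stmt11x (k : Type*) [Field k] : Stmt11Base k :=
  Ideal.Quotient.mk _ (X 0)

/-- The image of `Y` in `A`. -/
noncomputable abbrev stmt11y (k : Type*) [Field k] : Stmt11Base k :=
  Ideal.Quotient.mk _ (X 1)

/-- The ideal `(x, y)` of `A`. -/
noncomputable abbrev stmt11P (k : Type*) [Field k] : Ideal (Stmt11Base k) :=
  Ideal.span {stmt11x k, stmt11y k}

/-- In `R = (k[X,Y]/(XY,Y²))` localized at `(x,y)`, with `m = (x,y)`,
one has `m² = (x)·m` and `y ∉ (x)`: `(x)` is a reduction of `m` with reduction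
number exactly 1. -/
lemma aux_sq_eq {R : Type*} [CommRing R] {a b : R} (hab : a * b = 0) (hbb : b * b = 0) :
    Ideal.span {a, b} ^ 2 = Ideal.span {a} * Ideal.span {a, b} := by
  apply le_antisymm
  · rw [sq]
    apply Ideal.mul_le.2
    intro r hr s hs
    obtain ⟨u, v, rfl⟩ := Ideal.mem_span_pair.1 hr
    obtain ⟨u', v', rfl⟩ := Ideal.mem_span_pair.1 hs
    have key : (u * a + v * b) * (u' * a + v' * b) = (u * u') * (a * a) := by
      linear_combination (u * v' + v * u') * hab + v * v' * hbb
    rw [key]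
    exact Ideal.mul_mem_left _ _ (Ideal.mul_mem_mul
      (Ideal.subset_span (Set.mem_singleton a))
      (Ideal.subset_span (Set.mem_insert a {b})))
  · rw [sq]
    exact Ideal.mul_mono (Ideal.span_mono (Set.singleton_subset_iff.2 (Set.mem_insert a {b})))
      le_rfl

noncomputable def phi11 (k : Type*) [Field k] : Stmt11Base k →+* DualNumber k :=
  Ideal.Quotient.lift _ (MvPolynomial.aeval ![0, DualNumber.eps]).toRingHom (by
    intro p hp
    have h0 : (MvPolynomial.aeval (R := k) ![0, (DualNumber.eps : DualNumber k)]).toRingHom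
        (X 0 * X 1) = 0 := by simp
    have h1 : (MvPolynomial.aeval (R := k) ![0, (DualNumber.eps : DualNumber k)]).toRingHom
        ((X 1 : MvPolynomial (Fin 2) k) ^ 2) = 0 := by
      simp [sq, DualNumber.eps_mul_eps]
    have : Ideal.span {X 0 * X 1, (X 1 : MvPolynomial (Fin 2) k) ^ 2} ≤
        RingHom.ker (MvPolynomial.aeval (R := k) ![0, (DualNumber.eps : DualNumber k)]).toRingHom := by
      rw [Ideal.span_le]
      rintro q (rfl | rfl)
      · exact h0
      · exact h1
    exact this hp)

lemma phi11_mk {k : Type*} [Field k] (p : MvPolynomial (Fin 2) k) :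
    phi11 k (Ideal.Quotient.mk _ p) =
      MvPolynomial.aeval ![0, (DualNumber.eps : DualNumber k)] p := rfl

lemma pair_eq_image (k : Type*) [Field k] :
    ({X 0, X 1} : Set (MvPolynomial (Fin 2) k)) = X '' Set.univ := by
  ext q
  simp only [Set.image_univ, Set.mem_range, Set.mem_insert_iff, Set.mem_singleton_iff]
  constructor
  · rintro (rfl | rfl) <;> exact ⟨_, rfl⟩
  · rintro ⟨i, rfl⟩
    fin_cases i <;> simp

lemma isUnit_phi11 {k : Type*} [Field k] (u : Stmt11Base k) (hu : u ∉ stmt11P k) :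
    IsUnit (phi11 k u) := by
  obtain ⟨p, rfl⟩ := Ideal.Quotient.mk_surjective u
  rw [phi11_mk]
  rw [TrivSqZeroExt.isUnit_iff_isUnit_fst, isUnit_iff_ne_zero]
  intro hfst
  apply hu
  -- fst of the evaluation is the evaluation at (0,0)
  have hcomp : TrivSqZeroExt.fst (MvPolynomial.aeval ![0, (DualNumber.eps : DualNumber k)] p)
      = MvPolynomial.aeval (fun _ => (0 : k)) p := by
    have := congrFun (congrArg (DFunLike.coe)
      (MvPolynomial.algHom_ext (f := (TrivSqZeroExt.fstHom k k k).comp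
        (MvPolynomial.aeval ![0, (DualNumber.eps : DualNumber k)]))
        (g := MvPolynomial.aeval (fun _ => (0 : k))) (by
          intro i
          fin_cases i <;> simp))) p
    simpa using this
  have hc : constantCoeff p = 0 := by
    rw [hfst, MvPolynomial.aeval_zero'] at hcomp
    simpa using hcomp.symm
  have hmem : p ∈ Ideal.span ({X 0, X 1} : Set (MvPolynomial (Fin 2) k)) := by
    rw [pair_eq_image, mem_ideal_span_X_image]
    intro m hm
    by_contra hcon
    push_neg at hcon
    have : m = 0 := by
      ext i
      simpa using hcon i (Set.mem_univ i)
    rw [this] at hm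
    exact (MvPolynomial.mem_support_iff.1 hm) hc
  have : Ideal.Quotient.mk _ p ∈ Ideal.map (Ideal.Quotient.mk
      (Ideal.span {X 0 * X 1, (X 1 : MvPolynomial (Fin 2) k) ^ 2}))
      (Ideal.span ({X 0, X 1} : Set (MvPolynomial (Fin 2) k))) :=
    Ideal.mem_map_of_mem _ hmem
  rwa [Ideal.map_span, Set.image_insert_eq, Set.image_singleton] at this

theorem stmt_11 {k : Type*} [Field k] (hP : (stmt11P k).IsPrime) :
    haveI := hP
    Ideal.span {algebraMap (Stmt11Base k) (Localization.AtPrime (stmt11P k)) (stmt11x k),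
        algebraMap (Stmt11Base k) (Localization.AtPrime (stmt11P k)) (stmt11y k)} ^ 2 =
      Ideal.span {algebraMap (Stmt11Base k) (Localization.AtPrime (stmt11P k)) (stmt11x k)} *
        Ideal.span {algebraMap (Stmt11Base k) (Localization.AtPrime (stmt11P k)) (stmt11x k),
          algebraMap (Stmt11Base k) (Localization.AtPrime (stmt11P k)) (stmt11y k)} ∧
      algebraMap (Stmt11Base k) (Localization.AtPrime (stmt11P k)) (stmt11y k) ∉
        Ideal.span {algebraMap (Stmt11Base k) (Localization.AtPrime (stmt11P k)) (stmt11x k)} := by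
  haveI := hP
  set f := algebraMap (Stmt11Base k) (Localization.AtPrime (stmt11P k)) with hf
  have hxy : stmt11x k * stmt11y k = 0 := by
    rw [← map_mul, Ideal.Quotient.eq_zero_iff_mem]
    exact Ideal.subset_span (Set.mem_insert _ _)
  have hyy : stmt11y k * stmt11y k = 0 := by
    rw [← map_mul, Ideal.Quotient.eq_zero_iff_mem]
    exact Ideal.subset_span (by simp [sq])
  constructor
  · exact aux_sq_eq (a := f (stmt11x k)) (b := f (stmt11y k)) (by rw [← map_mul, hxy, map_zero]) (by rw [← map_mul, hyy, map_zero])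
  · intro hmem
    obtain ⟨c, hc⟩ := Ideal.mem_span_singleton'.1 hmem
    have hunit : ∀ s : (stmt11P k).primeCompl, IsUnit (phi11 k s) :=
      fun s => isUnit_phi11 s.1 s.2
    set L := IsLocalization.lift (M := (stmt11P k).primeCompl)
      (S := Localization.AtPrime (stmt11P k)) hunit with hL
    have happ : ∀ a : Stmt11Base k, L (f a) = phi11 k a := fun a =>
      IsLocalization.lift_eq hunit a
    have := congrArg L hc
    rw [map_mul, happ, happ] at this
    have hx0 : phi11 k (stmt11x k) = 0 := by
      rw [phi11_mk]; simp
    have hyε : phi11 k (stmt11y k) = DualNumber.eps := by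
      rw [phi11_mk]; simp
    rw [hx0, hyε, mul_zero] at this
    have h10 : (1 : k) = 0 := by
      have h' : (TrivSqZeroExt.inr (1 : k) : DualNumber k) = TrivSqZeroExt.inr (0 : k) := by
        rw [TrivSqZeroExt.inr_zero]; exact this.symm
      exact TrivSqZeroExt.inr_injective h'
    exact one_ne_zero h10
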